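/- The update-wins Map⟨Set⟩ specification-level semantics (SLS) agrees with its compositional realization (ICS): for every operation context, contains(k, x) holds under SLS iff k is in the key set (add-wins over keys, where upd(k,·) acts as add(k) and rmv(k) as del(k)) and x is in the value set for k (add-wins over values from upd(k, add(x)) / upd(k, del(x)) events, excluding upd events followed by a visible rmv(k)). -/
import Mathlib


/-- Operations of a Map⟨Set⟩: `upd(k, add x)`, `upd(k, del x)`, `rmv(k)`. -/
inductive MapOp (K V : Type) where
  | updAdd (k : K) (x : V)
  | updDel (k : K) (x : V)
  | rmv (k : K)

def visible {E : Type} (vis : E → E → Prop) : E → E → Prop :=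
  Relation.TransGen vis

/-- SLS: contains(k,x) iff some `upd(k, add x)` event has no visible later
`rmv(k)` and no visible later `upd(k, del x)`. -/
def slsContains {E K V : Type} (op : E → MapOp K V) (vis : E → E → Prop)
    (k : K) (x : V) : Prop :=
  ∃ e, op e = MapOp.updAdd k x ∧
    (¬ ∃ e', op e' = MapOp.rmv k ∧ visible vis e e') ∧
    (¬ ∃ e'', op e'' = MapOp.updDel k x ∧ visible vis e e'')

/-- ICS key set: add-wins set over keys, where `upd(k,·)` acts as `add(k)` and
`rmv(k)` as `del(k)`. -/
def icsKeyPresent {E K V : Type} (op : E → MapOp K V) (vis : E → E → Prop)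
    (k : K) : Prop :=
  ∃ e, (∃ x, op e = MapOp.updAdd k x ∨ op e = MapOp.updDel k x) ∧
    ¬ ∃ e', op e' = MapOp.rmv k ∧ visible vis e e'

/-- ICS value set for key `k`: add-wins over values from upd events,
restricted to upd events with no visible later `rmv(k)`. -/
def icsValPresent {E K V : Type} (op : E → MapOp K V) (vis : E → E → Prop)
    (k : K) (x : V) : Prop :=
  ∃ e, op e = MapOp.updAdd k x ∧
    (¬ ∃ r, op r = MapOp.rmv k ∧ visible vis e r) ∧
    ¬ ∃ e', op e' = MapOp.updDel k x ∧
      (¬ ∃ r, op r = MapOp.rmv k ∧ visible vis e' r) ∧ visible vis e e'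

/-- SLS and ICS of the update-wins Map⟨Set⟩ agree on every operation context. -/
theorem stmt7 {E K V : Type} (op : E → MapOp K V) (vis : E → E → Prop)
    (k : K) (x : V) :
    slsContains op vis k x ↔ icsKeyPresent op vis k ∧ icsValPresent op vis k x := by
  constructor
  · rintro ⟨e, he, hr, hd⟩
    refine ⟨⟨e, ⟨x, Or.inl he⟩, hr⟩, ⟨e, he, hr, ?_⟩⟩
    rintro ⟨e', he', _, hv⟩
    exact hd ⟨e', he', hv⟩
  · rintro ⟨_, ⟨e, he, hr, hd⟩⟩
    refine ⟨e, he, hr, ?_⟩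
    rintro ⟨e', he', hv⟩
    apply hd
    refine ⟨e', he', ?_, hv⟩
    rintro ⟨r, hrk, hvr⟩
    exact hr ⟨r, hrk, hv.trans hvr⟩
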